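/- Let S, A, C be as in 4.1 and g = S·diag(t,s,r)·S⁻¹ with t,s,r ∈ ℝ_{>0}. If g lies in G_{>0} (all nine entries positive, all four 'consecutive' 2×2 minors g_{i,j}g_{i+1,j+1} − g_{i,j+1}g_{i+1,j} positive for (i,j) ∈ {(1,1),(1,2),(2,1),(2,2)}, and det g > 0), then t > s > r. -/

import Mathlib

open Matrix

/-- Total positivity for a 3×3 real matrix: all entries positive, the four
consecutive 2×2 minors positive, and the determinant positive. -/
def TP3 (g : Matrix (Fin 3) (Fin 3) ℝ) : Prop :=
  (∀ i j : Fin 3, 0 < g i j) ∧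
  (∀ i j : Fin 2, 0 < g i.castSucc j.castSucc * g i.succ j.succ -
      g i.castSucc j.succ * g i.succ j.castSucc) ∧
  0 < g.det

set_option maxHeartbeats 2000000


lemma perron3 (B : Matrix (Fin 3) (Fin 3) ℝ) (hB : ∀ i j, 0 < B i j)
    (v w : Fin 3 → ℝ) (lam mu : ℝ)
    (hv : ∀ i, 0 < v i)
    (hlam : ∀ i, B.mulVec v i = lam * v i)
    (hmu : ∀ i, B.mulVec w i = mu * w i)
    (hw0 : w 0 < 0) (hw2 : 0 < w 2) : mu < lam := by
  set ρ := min (min (w 0 / v 0) (w 1 / v 1)) (w 2 / v 2) with hρ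
  have hρneg : ρ < 0 := by
    have h0 : w 0 / v 0 < 0 := div_neg_of_neg_of_pos hw0 (hv 0)
    have := min_le_left (min (w 0 / v 0) (w 1 / v 1)) (w 2 / v 2)
    have := min_le_left (w 0 / v 0) (w 1 / v 1)
    linarith
  have hle : ∀ i, ρ * v i ≤ w i := by
    intro i
    have hd : ρ ≤ w i / v i := by
      fin_cases i
      · exact le_trans (min_le_left _ _) (min_le_left _ _)
      · exact le_trans (min_le_left _ _) (min_le_right _ _)
      · exact min_le_right _ _
    nlinarith [(le_div_iff₀ (hv i)).mp hd]
  obtain ⟨i0, hi0⟩ : ∃ i0, ρ = w i0 / v i0 := by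
    rcases min_cases (min (w 0 / v 0) (w 1 / v 1)) (w 2 / v 2) with ⟨h, _⟩ | ⟨h, _⟩
    · rcases min_cases (w 0 / v 0) (w 1 / v 1) with ⟨h2, _⟩ | ⟨h2, _⟩
      · exact ⟨0, by rw [hρ, h, h2]⟩
      · exact ⟨1, by rw [hρ, h, h2]⟩
    · exact ⟨2, by rw [hρ, h]⟩
  have hwi0 : w i0 = ρ * v i0 := by
    rw [hi0]; exact (div_mul_cancel₀ _ (hv i0).ne').symm
  have e1 : B i0 0 * w 0 + B i0 1 * w 1 + B i0 2 * w 2 = mu * w i0 := by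
    have := hmu i0
    simpa [Matrix.mulVec, dotProduct, Fin.sum_univ_three] using this
  have e2 : B i0 0 * v 0 + B i0 1 * v 1 + B i0 2 * v 2 = lam * v i0 := by
    have := hlam i0
    simpa [Matrix.mulVec, dotProduct, Fin.sum_univ_three] using this
  have hsum : mu * w i0 - lam * (ρ * v i0) =
      B i0 0 * (w 0 - ρ * v 0) + B i0 1 * (w 1 - ρ * v 1) + B i0 2 * (w 2 - ρ * v 2) := by
    linear_combination ρ * e2 - e1
  have p0 : 0 ≤ B i0 0 * (w 0 - ρ * v 0) := mul_nonneg (hB i0 0).le (by linarith [hle 0])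
  have p1 : 0 ≤ B i0 1 * (w 1 - ρ * v 1) := mul_nonneg (hB i0 1).le (by linarith [hle 1])
  have p2 : 0 < B i0 2 * (w 2 - ρ * v 2) := by
    have : 0 < w 2 - ρ * v 2 := by nlinarith [hv 2]
    exact mul_pos (hB i0 2) this
  have hkey : 0 < mu * (ρ * v i0) - lam * (ρ * v i0) := by
    rw [hwi0] at hsum; linarith
  have hρv : ρ * v i0 < 0 := mul_neg_of_neg_of_pos hρneg (hv i0)
  nlinarith [hkey, hρv]

lemma col_eig (B U : Matrix (Fin 3) (Fin 3) ℝ) (d : Fin 3 → ℝ)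
    (h : B * U = U * diagonal d) (k : Fin 3) :
    ∀ i, B.mulVec (fun j => U j k) i = d k * U i k := by
  intro i
  have h2 := congrFun (congrFun h i) k
  rw [Matrix.mul_apply, Matrix.mul_diagonal] at h2
  simpa [Matrix.mulVec, dotProduct, mul_comm] using h2

theorem stmt10 (a b c a' b' c' : ℝ) (ha : 0 < a) (hb : 0 < b) (hc : 0 < c)
    (ha' : 0 < a') (hb' : 0 < b') (hc' : 0 < c')
    (h1 : 0 < a * c - b) (h2 : 0 < a' * c' - b')
    (A C : ℝ) (hA : A = a * c + a' * c + a' * c' - b - b') (hC : C = a * c' + b + b')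
    (t s r : ℝ) (ht : 0 < t) (hs : 0 < s) (hr : 0 < r)
    (S : Matrix (Fin 3) (Fin 3) ℝ)
    (hS : S = !![1, -(c + c')/C, 1/A;
                 a, (-(a*c) + b + b')/C, -a'/A;
                 b, (a*c*c' - b*c' + b'*c)/C, (a'*c' - b')/A])
    (hg : TP3 (S * diagonal ![t, s, r] * S⁻¹)) :
    t > s ∧ s > r := by
  subst hA hC
  have hApos : 0 < a * c + a' * c + a' * c' - b - b' := by nlinarith
  have h2' : 0 < a' * c' - b' := h2
  have hCpos : 0 < a * c' + b + b' := by positivity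
  set T : Matrix (Fin 3) (Fin 3) ℝ :=
    !![b'/(a * c' + b + b'), c'/(a * c' + b + b'), 1/(a * c' + b + b');
       (a*b' - a'*b - a*a'*c')/(a * c + a' * c + a' * c' - b - b'),
         (a'*c' - b - b')/(a * c + a' * c + a' * c' - b - b'),
         (a + a')/(a * c + a' * c + a' * c' - b - b');
       a*c - b, -c, 1] with hT
  have hAne2 : c * (a + a') + c' * a' - b - b' ≠ 0 := by nlinarith
  have hAne3 : c * (a + a') + a' * c' - b - b' ≠ 0 := by nlinarith
  have hST : S * T = 1 := by
    ext i j
    fin_cases i <;> fin_cases j <;>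
      (simp [hS, hT, Matrix.mul_apply, Fin.sum_univ_three, Matrix.one_apply] <;>
       field_simp <;> ring)
  have hTS : T * S = 1 := by
    ext i j
    fin_cases i <;> fin_cases j <;>
      (try simp [hS, hT, Matrix.mul_apply, Fin.sum_univ_three, Matrix.one_apply]) <;>
      (try field_simp) <;> (try ring)
  have hSinv : S⁻¹ = T := inv_eq_right_inv hST
  unfold TP3 at hg
  rw [hSinv] at hg
  obtain ⟨gpos, hmin, hdetpos⟩ := hg
  set g := S * diagonal ![t, s, r] * T with hgdef
  have m00 : 0 < g 0 0 * g 1 1 - g 0 1 * g 1 0 := by simpa using hmin 0 0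
  have m01 : 0 < g 0 1 * g 1 2 - g 0 2 * g 1 1 := by simpa using hmin 0 1
  have m10 : 0 < g 1 0 * g 2 1 - g 1 1 * g 2 0 := by simpa using hmin 1 0
  have m11 : 0 < g 1 1 * g 2 2 - g 1 2 * g 2 1 := by simpa using hmin 1 1
  -- derived minors
  have n0102 : 0 < g 0 0 * g 1 2 - g 0 2 * g 1 0 := by
    have hx : 0 < (g 0 0 * g 1 2 - g 0 2 * g 1 0) * g 0 1 := by
      nlinarith [mul_pos m00 (gpos 0 2), mul_pos m01 (gpos 0 0)]
    exact (mul_pos_iff_of_pos_right (gpos 0 1)).mp hx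
  have n1202 : 0 < g 1 0 * g 2 2 - g 1 2 * g 2 0 := by
    have hx : 0 < (g 1 0 * g 2 2 - g 1 2 * g 2 0) * g 1 1 := by
      nlinarith [mul_pos m10 (gpos 1 2), mul_pos m11 (gpos 1 0)]
    exact (mul_pos_iff_of_pos_right (gpos 1 1)).mp hx
  have n0201 : 0 < g 0 0 * g 2 1 - g 0 1 * g 2 0 := by
    have hx : 0 < (g 0 0 * g 2 1 - g 0 1 * g 2 0) * g 1 0 := by
      nlinarith [mul_pos m00 (gpos 2 0), mul_pos m10 (gpos 0 0)]
    exact (mul_pos_iff_of_pos_right (gpos 1 0)).mp hx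
  have n0212 : 0 < g 0 1 * g 2 2 - g 0 2 * g 2 1 := by
    have hx : 0 < (g 0 1 * g 2 2 - g 0 2 * g 2 1) * g 1 1 := by
      nlinarith [mul_pos m01 (gpos 2 1), mul_pos m11 (gpos 0 1)]
    exact (mul_pos_iff_of_pos_right (gpos 1 1)).mp hx
  have n0202 : 0 < g 0 0 * g 2 2 - g 0 2 * g 2 0 := by
    have hx : 0 < (g 0 0 * g 2 2 - g 0 2 * g 2 0) * g 1 0 := by
      nlinarith [mul_pos n0102 (gpos 2 0), mul_pos n1202 (gpos 0 0)]
    exact (mul_pos_iff_of_pos_right (gpos 1 0)).mp hx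
  -- eigen equations for g
  have hgS : g * S = S * diagonal ![t, s, r] := by
    rw [hgdef, Matrix.mul_assoc (S * diagonal ![t, s, r]) T S, hTS, Matrix.mul_one]
  have heig1 := col_eig g S ![t, s, r] hgS
  have hv1 : ∀ i, 0 < S i 0 := by
    intro i; fin_cases i
    · norm_num [hS]
    · simpa [hS] using ha
    · simpa [hS] using hb
  have hw1_0 : S 0 1 < 0 := by
    have he : S 0 1 = -((c + c')/(a*c' + b + b')) := by simp [hS, neg_div]; ring
    have hp : 0 < (c + c')/(a*c' + b + b') := by positivity
    rw [he]; linarith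
  have hw1_2 : 0 < S 2 1 := by
    have he : S 2 1 = (a*c*c' - b*c' + b'*c)/(a*c' + b + b') := by simp [hS]
    rw [he]; exact div_pos (by nlinarith) hCpos
  have hts : s < t :=
    perron3 g gpos (fun i => S i 0) (fun i => S i 1) t s hv1
      (by intro i; simpa using heig1 0 i) (by intro i; simpa using heig1 1 i) hw1_0 hw1_2
  -- determinant of g
  have hdetST : S.det * T.det = 1 := by
    have := congrArg Matrix.det hST
    rwa [Matrix.det_mul, Matrix.det_one] at this
  have hdetg : g.det = t * s * r := by
    rw [hgdef, Matrix.det_mul, Matrix.det_mul, Matrix.det_diagonal]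
    simp only [Fin.prod_univ_three]
    norm_num
    rw [show ![t, s, r] 2 = r from rfl]
    linear_combination (t * s * r) * hdetST
  have hdet_unit : IsUnit g.det := by
    rw [hdetg]; exact isUnit_iff_ne_zero.mpr (by positivity)
  have hginv : g * g⁻¹ = 1 := Matrix.mul_nonsing_inv g hdet_unit
  set D2 : Matrix (Fin 3) (Fin 3) ℝ := diagonal ![s*r, t*r, t*s] with hD2
  set h2 : Matrix (Fin 3) (Fin 3) ℝ := S * D2 * T with hh2def
  have hdiagprod : D2 * diagonal ![t, s, r] = (t*s*r) • (1 : Matrix (Fin 3) (Fin 3) ℝ) := by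
    rw [hD2, diagonal_mul_diagonal]
    have hfun : (fun i => ![s*r, t*r, t*s] i * ![t, s, r] i) = fun _ : Fin 3 => t*s*r := by
      funext i; fin_cases i <;> (simp; try ring)
    rw [hfun]
    ext i j
    by_cases hij : i = j <;> simp [Matrix.diagonal_apply, Matrix.one_apply, hij]
  have hh2g : h2 * g = (t*s*r) • (1 : Matrix (Fin 3) (Fin 3) ℝ) := by
    have e1 : T * (S * diagonal ![t, s, r] * T) = diagonal ![t, s, r] * T := by
      rw [← Matrix.mul_assoc, ← Matrix.mul_assoc, hTS, Matrix.one_mul]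
    rw [hh2def, hgdef, Matrix.mul_assoc (S * D2) T _, e1,
        Matrix.mul_assoc S D2 _, ← Matrix.mul_assoc D2 _ T, hdiagprod]
    simp only [Matrix.smul_mul, Matrix.one_mul, Matrix.mul_smul, hST]
  have hadj : h2 = g.adjugate := by
    have e : h2 * g = g.adjugate * g := by
      rw [hh2g, Matrix.adjugate_mul, hdetg]
    calc h2 = h2 * (g * g⁻¹) := by rw [hginv, Matrix.mul_one]
      _ = (h2 * g) * g⁻¹ := (Matrix.mul_assoc h2 g g⁻¹).symm
      _ = (g.adjugate * g) * g⁻¹ := by rw [e]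
      _ = g.adjugate * (g * g⁻¹) := Matrix.mul_assoc _ _ _
      _ = g.adjugate := by rw [hginv, Matrix.mul_one]
  set E : Matrix (Fin 3) (Fin 3) ℝ := diagonal ![1, -1, 1] with hE
  have hEE : E * E = 1 := by
    ext i j
    fin_cases i <;> fin_cases j <;>
      simp [hE, Matrix.mul_apply, Fin.sum_univ_three, Matrix.diagonal, Matrix.one_apply]
  set B2 := E * h2 * E with hB2
  have hB2eig : B2 * (E * S) = (E * S) * D2 := by
    have h2S : h2 * S = S * D2 := by
      rw [hh2def, Matrix.mul_assoc (S * D2) T S, hTS, Matrix.mul_one]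
    rw [hB2, Matrix.mul_assoc (E * h2) E (E*S), ← Matrix.mul_assoc E E S, hEE,
        Matrix.one_mul, Matrix.mul_assoc E h2 S, h2S, ← Matrix.mul_assoc E S D2]
  have hB2pos : ∀ i j, 0 < B2 i j := by
    intro i j
    rw [hB2, hadj]
    fin_cases i <;> fin_cases j <;>
      (simp [hE, Matrix.mul_apply, Fin.sum_univ_three, Matrix.diagonal,
             Matrix.adjugate_fin_three g] <;>
       linarith [m00, m01, m10, m11, n0102, n1202, n0201, n0212, n0202])
  have heig2 := col_eig B2 (E * S) ![s*r, t*r, t*s] hB2eig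
  have hv2 : ∀ i, 0 < (E * S) i 2 := by
    intro i
    fin_cases i <;>
      simp [hE, hS, Matrix.mul_apply, Fin.sum_univ_three, Matrix.diagonal]
    · linarith
    · exact div_neg_of_neg_of_pos (by linarith) hApos
    · exact div_pos (by linarith) hApos
  have hw2_0 : (E * S) 0 1 < 0 := by
    have e0 : (E * S) 0 1 = S 0 1 := by
      simp [hE, Matrix.mul_apply, Fin.sum_univ_three, Matrix.diagonal]
    rw [e0]; exact hw1_0
  have hw2_2 : 0 < (E * S) 2 1 := by
    have e0 : (E * S) 2 1 = S 2 1 := by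
      simp [hE, Matrix.mul_apply, Fin.sum_univ_three, Matrix.diagonal]
    rw [e0]; exact hw1_2
  have hrs : t*r < t*s :=
    perron3 B2 hB2pos (fun i => (E*S) i 2) (fun i => (E*S) i 1) (t*s) (t*r) hv2
      (by intro i; simpa using heig2 2 i) (by intro i; simpa using heig2 1 i) hw2_0 hw2_2
  exact ⟨hts, (mul_lt_mul_iff_right₀ ht).mp hrs⟩
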